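/- Let n ≥ 1, let τ, κ₀ be real numbers, let R be a curvature-type tensor, and let T be a torsion-type tensor that is antisymmetric in its first two arguments (T i k r = − T k i r). Suppose that for all indices i, j, k, l: R i j k l + R k l i j = 2 κ₀ · (if i = l ∧ k = j then 1 else 0) + ((1−τ)/2) · ∑_r T i k r · conj (T j l r). Then ∑_{i,k} (R i i k k − R k i i k) = κ₀ · n · (1 − n) + ((1−τ)/2) · ∑_{i,k,r} ‖T i k r‖², where the left-hand side (a priori a complex number) equals the real number on the right. -/

import Mathlib

/-- Pointwise algebraic identity at the heart of Proposition 2.4: the divergence of the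
torsion `(1,0)`-form in terms of the constant `κ₀` and the torsion norm. -/
theorem constant_tempered_RBC_divergence_identity (n : ℕ) (hn : 1 ≤ n) (τ κ₀ : ℝ)
    (R : Fin n → Fin n → Fin n → Fin n → ℂ)
    (T : Fin n → Fin n → Fin n → ℂ)
    (hT : ∀ i k r : Fin n, T i k r = - T k i r)
    (hpol : ∀ i j k l : Fin n,
      R i j k l + R k l i j
        = 2 * (κ₀ : ℂ) * (if i = l ∧ k = j then 1 else 0)
          + (((1 - τ)/2 : ℝ) : ℂ) * ∑ r : Fin n, T i k r * (starRingEnd ℂ) (T j l r)) :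
    (∑ i : Fin n, ∑ k : Fin n, (R i i k k - R k i i k))
      = ((κ₀ * (n : ℝ) * (1 - (n : ℝ))
          + ((1 - τ)/2) * ∑ i : Fin n, ∑ k : Fin n, ∑ r : Fin n, ‖T i k r‖^2 : ℝ) : ℂ) := by
  have hnorm : ∀ i k r : Fin n, T i k r * (starRingEnd ℂ) (T i k r) = ((‖T i k r‖^2 : ℝ) : ℂ) := by
    intro i k r
    rw [Complex.mul_conj]
    norm_cast
    rw [← Complex.sq_norm]
  have h1 : (2:ℂ) * ∑ i : Fin n, ∑ k : Fin n, R i i k k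
      = 2 * (κ₀:ℂ) * n + (((1 - τ)/2 : ℝ) : ℂ) *
        ∑ i : Fin n, ∑ k : Fin n, ∑ r : Fin n, ((‖T i k r‖^2 : ℝ) : ℂ) := by
    have hsw1 : ∑ i : Fin n, ∑ k : Fin n, R k k i i
        = ∑ i : Fin n, ∑ k : Fin n, R i i k k := Finset.sum_comm
    have key : ∑ i : Fin n, ∑ k : Fin n, (R i i k k + R k k i i)
        = (2:ℂ) * ∑ i : Fin n, ∑ k : Fin n, R i i k k := by
      simp only [Finset.sum_add_distrib]
      rw [hsw1]; ring
    rw [← key]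
    simp only [fun i k => hpol i i k k, hnorm]
    have e : ∀ x x1 : Fin n, (x = x1 ∧ x1 = x) = (x = x1) := by
      intro x x1
      apply propext
      exact ⟨fun h => h.1, fun h => ⟨h, h.symm⟩⟩
    simp only [e, Finset.sum_add_distrib, mul_ite, mul_one, mul_zero,
      Finset.sum_ite_eq, Finset.mem_univ, if_true, Finset.sum_const,
      Finset.card_univ, Fintype.card_fin, nsmul_eq_mul, Finset.mul_sum]
    push_cast
    ring
  have h2 : (2:ℂ) * ∑ i : Fin n, ∑ k : Fin n, R k i i k
      = 2 * (κ₀:ℂ) * n^2 - (((1 - τ)/2 : ℝ) : ℂ) *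
        ∑ i : Fin n, ∑ k : Fin n, ∑ r : Fin n, ((‖T i k r‖^2 : ℝ) : ℂ) := by
    have key : ∀ i k : Fin n, ∑ r : Fin n, T i k r * (starRingEnd ℂ) (T k i r)
        = - ∑ r : Fin n, ((‖T i k r‖^2 : ℝ) : ℂ) := by
      intro i k
      rw [← Finset.sum_neg_distrib]
      congr 1; ext r
      rw [hT k i r, map_neg, mul_neg, hnorm]
    have hsw : ∑ i : Fin n, ∑ k : Fin n, R i k k i
        = ∑ i : Fin n, ∑ k : Fin n, R k i i k := Finset.sum_comm
    have key2 : ∑ i : Fin n, ∑ k : Fin n, (R i k k i + R k i i k)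
        = (2:ℂ) * ∑ i : Fin n, ∑ k : Fin n, R k i i k := by
      simp only [Finset.sum_add_distrib]
      rw [hsw]; ring
    rw [← key2]
    simp only [fun i k => hpol i k k i, key, and_self, if_true]
    simp only [mul_one, mul_neg, Finset.sum_add_distrib, Finset.sum_neg_distrib,
      Finset.sum_const, Finset.card_univ, Fintype.card_fin, nsmul_eq_mul, Finset.mul_sum]
    push_cast
    ring
  simp only [Finset.sum_sub_distrib]
  push_cast at h1 h2 ⊢
  linear_combination (1/2 : ℂ) * h1 - (1/2 : ℂ) * h2
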